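/- For w an injective word over [n-1] and q = (w, 1), the fiber f⁻¹(q) consists exactly of the words obtained from w by inserting the letter n into one of the (length(w)+1) possible positions; in particular |f⁻¹((w,1))| = length(w) + 1. -/

import Mathlib

lemma erase_insertIdx {a : ℕ} : ∀ (l : List ℕ) (i : ℕ), a ∉ l → i ≤ l.length →
    (l.insertIdx i a).erase a = l
  | l, 0, _, _ => by simp [List.insertIdx_zero]
  | [], i+1, _, h => by simp at h
  | b :: t, i+1, ha, h => by
    have hab : b ≠ a := fun e => ha (e ▸ List.mem_cons_self (a := b) (l := t))
    rw [List.insertIdx_succ_cons, List.erase_cons_tail (by simpa using hab),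
      erase_insertIdx t i (fun hm => ha (List.mem_cons_of_mem _ hm)) (by simpa using h)]

lemma mem_insertIdx_self {a : ℕ} : ∀ (l : List ℕ) (i : ℕ), i ≤ l.length →
    a ∈ l.insertIdx i a
  | l, 0, _ => by simp [List.insertIdx_zero]
  | [], i+1, h => by simp at h
  | b :: t, i+1, h => by
    rw [List.insertIdx_succ_cons]
    exact List.mem_cons_of_mem _ (mem_insertIdx_self t i (by simpa using h))

lemma nodup_insertIdx {a : ℕ} : ∀ (l : List ℕ) (i : ℕ), a ∉ l → l.Nodup → i ≤ l.length →
    (l.insertIdx i a).Nodup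
  | l, 0, ha, hl, _ => by simp [List.insertIdx_zero, ha, hl]
  | [], i+1, _, _, h => by simp at h
  | b :: t, i+1, ha, hl, h => by
    rw [List.insertIdx_succ_cons, List.nodup_cons]
    have hle : i ≤ t.length := by simpa using h
    refine ⟨fun hb => ?_, nodup_insertIdx t i (fun hm => ha (List.mem_cons_of_mem _ hm))
      (List.nodup_cons.mp hl).2 hle⟩
    rcases (List.mem_insertIdx hle).mp hb with e | hb
    · exact ha (e ▸ List.mem_cons_self (a := b) (l := t))
    · exact (List.nodup_cons.mp hl).1 hb

lemma eq_insertIdx_of_erase {a : ℕ} : ∀ (l : List ℕ), a ∈ l →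
    ∃ i ≤ (l.erase a).length, l = (l.erase a).insertIdx i a
  | [], h => by simp at h
  | b :: t, h => by
    by_cases hb : b = a
    · exact ⟨0, Nat.zero_le _, by simp [hb, List.insertIdx_zero]⟩
    · have ht : a ∈ t := by rcases List.mem_cons.mp h with e | ht; exact absurd e.symm hb; exact ht
      obtain ⟨i, hi, he⟩ := eq_insertIdx_of_erase t ht
      refine ⟨i + 1, ?_, ?_⟩
      · rw [List.erase_cons_tail (by simpa using hb)]; simpa using hi
      · rw [List.erase_cons_tail (by simpa using hb), List.insertIdx_succ_cons]
        exact congrArg (b :: ·) he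

lemma insertIdx_inj {a : ℕ} : ∀ (l : List ℕ) (i j : ℕ), a ∉ l → i ≤ l.length → j ≤ l.length →
    l.insertIdx i a = l.insertIdx j a → i = j
  | l, 0, 0, _, _, _, _ => rfl
  | [], i+1, j, _, h, _, _ => by simp at h
  | [], i, j+1, _, _, h, _ => by simp at h
  | b :: t, 0, j+1, ha, _, hj, he => by
    rw [List.insertIdx_zero, List.insertIdx_succ_cons] at he
    exact absurd (List.cons.inj he).1 (fun e => ha (e ▸ List.mem_cons_self (a := b) (l := t)))
  | b :: t, i+1, 0, ha, hi, _, he => by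
    rw [List.insertIdx_zero, List.insertIdx_succ_cons] at he
    exact absurd (List.cons.inj he).1.symm (fun e => ha (e ▸ List.mem_cons_self (a := b) (l := t)))
  | b :: t, i+1, j+1, ha, hi, hj, he => by
    rw [List.insertIdx_succ_cons, List.insertIdx_succ_cons] at he
    exact congrArg (· + 1) (insertIdx_inj t i j (fun hm => ha (List.mem_cons_of_mem _ hm))
      (by simpa using hi) (by simpa using hj) (List.cons.inj he).2)

/-- Injective words over the alphabet `{1, …, n}`. -/
def NWord (n : ℕ) : Type := {l : List ℕ // l.Nodup ∧ ∀ x ∈ l, 1 ≤ x ∧ x ≤ n}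

/-- Deletion of the letter `n` from an injective word over `{1, …, n}`. -/
def delTop (n : ℕ) (w : NWord n) : NWord (n - 1) :=
  ⟨w.val.erase n, by
    obtain ⟨hnd, hmem⟩ := w.prop
    refine ⟨hnd.erase n, fun x hx => ?_⟩
    rw [hnd.mem_erase_iff] at hx
    have := hmem x hx.2
    omega⟩

/-- The map `f : I_n → I_{n-1} × {0,1}`. -/
def injMap (n : ℕ) (w : NWord n) : NWord (n - 1) × Bool :=
  (delTop n w, decide (n ∈ w.val))

/-- For an injective word `w` over `{1, …, n-1}`, the fiber `f⁻¹((w, 1))`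
consists exactly of the words obtained from `w` by inserting the letter `n`
into one of the `length(w) + 1` possible positions; in particular it has
cardinality `length(w) + 1`. -/
theorem stmt_15 {n : ℕ} (hn : 1 ≤ n) (w : NWord (n - 1)) :
    {u : NWord n | injMap n u = (w, true)} =
      {u : NWord n | ∃ i ≤ w.val.length, u.val = w.val.insertIdx i n} ∧
    Set.ncard {u : NWord n | injMap n u = (w, true)} = w.val.length + 1 := by
  have hnw : n ∉ w.val := fun h => by have := w.prop.2 n h; omega
  have hseteq : {u : NWord n | injMap n u = (w, true)} =
      {u : NWord n | ∃ i ≤ w.val.length, u.val = w.val.insertIdx i n} := by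
    ext u
    simp only [Set.mem_setOf_eq, injMap, Prod.mk.injEq, decide_eq_true_iff]
    constructor
    · rintro ⟨hdel, hmem⟩
      have hval : u.val.erase n = w.val := congrArg Subtype.val hdel
      obtain ⟨i, hi, he⟩ := eq_insertIdx_of_erase u.val hmem
      rw [hval] at hi he
      exact ⟨i, hi, he⟩
    · rintro ⟨i, hi, he⟩
      refine ⟨Subtype.ext ?_, ?_⟩
      · show u.val.erase n = w.val
        rw [he, erase_insertIdx w.val i hnw hi]
      · rw [he]; exact mem_insertIdx_self w.val i hi
  refine ⟨hseteq, ?_⟩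
  rw [hseteq]
  set L := w.val.length with hL
  have hg : ∀ i : Fin (L + 1), (w.val.insertIdx i n).Nodup ∧
      ∀ x ∈ w.val.insertIdx i n, 1 ≤ x ∧ x ≤ n := by
    intro i
    have hile : (i : ℕ) ≤ w.val.length := Nat.lt_succ_iff.mp i.isLt
    refine ⟨nodup_insertIdx w.val i hnw w.prop.1 hile, fun x hx => ?_⟩
    rcases (List.mem_insertIdx hile).mp hx with e | hx
    · omega
    · have := w.prop.2 x hx; omega
  let g : Fin (L + 1) → NWord n := fun i => ⟨w.val.insertIdx i n, hg i⟩
  have hrange : {u : NWord n | ∃ i ≤ w.val.length, u.val = w.val.insertIdx i n} =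
      Set.range g := by
    ext u
    simp only [Set.mem_setOf_eq, Set.mem_range]
    constructor
    · rintro ⟨i, hi, he⟩
      exact ⟨⟨i, Nat.lt_succ_of_le hi⟩, (Subtype.ext he.symm : g _ = u)⟩
    · rintro ⟨i, rfl⟩
      exact ⟨i, Nat.lt_succ_iff.mp i.isLt, rfl⟩
  have hinj : Function.Injective g := by
    intro i j hij
    have := congrArg Subtype.val hij
    exact Fin.ext (insertIdx_inj w.val i j hnw (Nat.lt_succ_iff.mp i.isLt)
      (Nat.lt_succ_iff.mp j.isLt) this)
  rw [hrange, ← Set.image_univ, Set.ncard_image_of_injective _ hinj, Set.ncard_univ,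
    Nat.card_eq_fintype_card, Fintype.card_fin]
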